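/- arXiv:1911.03775 — 2 statements merged into one kernel-verified Lean document; each statement's English description precedes it below -/
import Mathlib

section
/- For x ∈ [0,1] let Z_n(x) = ζ_1(x) + ⋯ + ζ_n(x) be the lazy random walk on ℤ whose i.i.d. steps satisfy ℚ(ζ_i(x) = 0) = x and ℚ(ζ_i(x) = −1) = ℚ(ζ_i(x) = 1) = (1−x)/2. Then for every fixed n ≥ 1, the function F_n : [1/2, 1] → [0,1] defined by F_n(x) = ℚ(Z_n(x) = 0) is monotone increasing on [1/2, 1]. Explicitly, F_n(x) = ∑_{j=0}^{n} C(n,j) x^j (1−x)^{n−j} a_{n−j}, where a_r = C(r, r/2)·2^{−r} if r is even and a_r = 0 if r is odd, and this function of x is monotone increasing on [1/2, 1]. -/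
open intervalIntegral Real Finset


/-- `a_r = C(r, r/2) · 2^{-r}` for even `r`, and `a_r = 0` for odd `r`: the probability
that a symmetric simple random walk on `ℤ` is back at `0` after `r` steps. -/
noncomputable def aCoef (r : ℕ) : ℝ :=
  if Even r then (r.choose (r / 2) : ℝ) / 2 ^ r else 0

/-- `F_n(x) = ℚ(Z_n(x) = 0) = ∑_{j=0}^{n} C(n,j) x^j (1-x)^{n-j} a_{n-j}`, the
probability that the lazy random walk with laziness `x` is at `0` at time `n`. -/
noncomputable def lazyReturnProb (n : ℕ) (x : ℝ) : ℝ :=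
  ∑ j ∈ Finset.range (n + 1), (n.choose j : ℝ) * x ^ j * (1 - x) ^ (n - j) * aCoef (n - j)

lemma aCoef_zero : aCoef 0 = 1 := by simp [aCoef]
lemma aCoef_one : aCoef 1 = 0 := by simp [aCoef]

lemma aCoef_nonneg (r : ℕ) : 0 ≤ aCoef r := by
  unfold aCoef; split
  · positivity
  · exact le_refl 0

lemma aCoef_le_one (r : ℕ) : aCoef r ≤ 1 := by
  unfold aCoef; split
  · rw [div_le_one (by positivity)]
    have h : r.choose (r/2) ≤ 2 ^ r := by
      calc r.choose (r/2) ≤ ∑ m ∈ range (r+1), r.choose m :=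
            Finset.single_le_sum (f := fun m => r.choose m) (fun i _ => Nat.zero_le _)
              (by simp [Nat.lt_succ_iff, Nat.div_le_self])
        _ = 2 ^ r := Nat.sum_range_choose r
    exact_mod_cast h
  · norm_num

lemma aCoef_rec (r : ℕ) : aCoef (r + 2) = (r + 1) / (r + 2) * aCoef r := by
  rcases Nat.even_or_odd r with he | ho
  · obtain ⟨m, rfl⟩ : ∃ m, r = 2 * m := by
      obtain ⟨m, hm⟩ := he; exact ⟨m, by omega⟩
    have h1 : aCoef (2*m) = (Nat.centralBinom m : ℝ) / 2 ^ (2*m) := by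
      simp [aCoef, Nat.centralBinom, Nat.mul_div_cancel_left m two_pos]
    have h2 : aCoef (2*m + 2) = (Nat.centralBinom (m+1) : ℝ) / 2 ^ (2*m+2) := by
      have hev : Even (2*m+2) := ⟨m+1, by ring⟩
      have hd : (2*m+2)/2 = m+1 := by omega
      have hc : 2*(m+1) = 2*m+2 := by ring
      simp [aCoef, hev, hd, Nat.centralBinom, hc]
    have keyR : ((m:ℝ)+1) * (Nat.centralBinom (m+1) : ℝ) = 2 * (2*m+1) * Nat.centralBinom m := by
      exact_mod_cast Nat.succ_mul_centralBinom_succ m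
    rw [h1, h2]
    have hm1 : ((m:ℝ)+1) ≠ 0 := by positivity
    have h4 : (0:ℝ) < 2 ^ (2*m) := by positivity
    push_cast
    rw [pow_add]
    field_simp
    nlinarith [keyR]
  · have h1 : aCoef (r+2) = 0 := by
      have : ¬ Even (r+2) := by simp [Nat.even_add, Nat.odd_iff.mp ho, Nat.even_iff]
      simp [aCoef, this]
    have h2 : aCoef r = 0 := by
      have : ¬ Even r := by simp [Nat.even_iff, Nat.odd_iff.mp ho]
      simp [aCoef, this]
    rw [h1, h2, mul_zero]

lemma integral_cos_pow_two_pi (r : ℕ) :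
    ∫ θ in (0:ℝ)..(2*π), Real.cos θ ^ r = 2 * π * aCoef r := by
  induction r using Nat.twoStepInduction with
  | zero => simp [aCoef_zero, two_mul]
  | one => simp [aCoef_one]
  | more r ih _ =>
    rw [integral_cos_pow, ih, aCoef_rec]
    simp [Real.sin_two_pi]
    ring

lemma lazyReturnProb_eq (n : ℕ) (x : ℝ) :
    (∑ j ∈ Finset.range (n + 1),
        (n.choose j : ℝ) * x ^ j * (1 - x) ^ (n - j) * aCoef (n - j))
      = (2*π)⁻¹ * ∫ θ in (0:ℝ)..(2*π), (x + (1-x)*Real.cos θ)^n := by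
  have hπ : (0:ℝ) < 2*π := by positivity
  have key : (∫ θ in (0:ℝ)..(2*π), (x + (1-x)*Real.cos θ)^n)
      = ∑ j ∈ range (n+1), (n.choose j : ℝ) * x^j * (1-x)^(n-j) * (2*π*aCoef (n-j)) := by
    rw [intervalIntegral.integral_congr
      (g := fun θ => ∑ j ∈ range (n+1), x^j * ((1-x)*Real.cos θ)^(n-j) * n.choose j)
      (fun θ _ => add_pow x _ n)]
    rw [intervalIntegral.integral_finset_sum
      (fun j _ => (Continuous.intervalIntegrable (by fun_prop) _ _))]
    refine Finset.sum_congr rfl fun j _ => ?_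
    have h2 : ∀ θ:ℝ, x^j * ((1-x)*Real.cos θ)^(n-j) * n.choose j
        = (n.choose j : ℝ) * x^j * (1-x)^(n-j) * (Real.cos θ ^ (n-j)) := by
      intro θ; rw [mul_pow]; ring
    simp_rw [h2]
    rw [intervalIntegral.integral_const_mul, integral_cos_pow_two_pi]
  rw [key, Finset.mul_sum]
  refine Finset.sum_congr rfl fun j _ => ?_
  field_simp


theorem lazyReturnProb_monotoneOn (n : ℕ) (hn : 1 ≤ n) :
    MonotoneOn (lazyReturnProb n) (Set.Icc (1 / 2 : ℝ) 1) ∧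
      ∀ x ∈ Set.Icc (1 / 2 : ℝ) 1, lazyReturnProb n x ∈ Set.Icc (0 : ℝ) 1 := by
  constructor
  · intro x hx y hy hxy
    unfold lazyReturnProb
    simp only [lazyReturnProb_eq]
    have hpi : (0:ℝ) < 2*π := by positivity
    refine mul_le_mul_of_nonneg_left ?_ (by positivity)
    refine intervalIntegral.integral_mono_on hpi.le
      (Continuous.intervalIntegrable (by fun_prop) _ _)
      (Continuous.intervalIntegrable (by fun_prop) _ _) (fun θ _ => ?_)
    refine pow_le_pow_left₀ ?_ ?_ n
    · nlinarith [Real.neg_one_le_cos θ, hx.1, hx.2]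
    · nlinarith [Real.cos_le_one θ, hx.2, hy.2]
  · intro x hx
    have hx0 : (0:ℝ) ≤ x := by linarith [hx.1]
    have hx1 : (0:ℝ) ≤ 1 - x := by linarith [hx.2]
    constructor
    · refine Finset.sum_nonneg fun j _ => ?_
      have := aCoef_nonneg (n - j)
      positivity
    · have h1 : lazyReturnProb n x ≤
          ∑ j ∈ Finset.range (n + 1), (n.choose j : ℝ) * x ^ j * (1 - x) ^ (n - j) := by
        refine Finset.sum_le_sum fun j _ => ?_
        have hterm : (0:ℝ) ≤ (n.choose j : ℝ) * x ^ j * (1 - x) ^ (n - j) := by positivity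
        calc (n.choose j : ℝ) * x ^ j * (1 - x) ^ (n - j) * aCoef (n - j)
            ≤ (n.choose j : ℝ) * x ^ j * (1 - x) ^ (n - j) * 1 :=
              mul_le_mul_of_nonneg_left (aCoef_le_one _) hterm
          _ = (n.choose j : ℝ) * x ^ j * (1 - x) ^ (n - j) := mul_one _
      have h2 : ∑ j ∈ Finset.range (n + 1),
          (n.choose j : ℝ) * x ^ j * (1 - x) ^ (n - j) = 1 := by
        have hap := add_pow x (1 - x) n
        have hsum : ((x + (1 - x)) : ℝ) ^ n = 1 := by norm_num
        rw [hsum] at hap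
        refine Eq.trans (Finset.sum_congr rfl fun j _ => ?_) hap.symm
        ring
      linarith
end

section
/- Let m ≥ 1, j ≥ 1 and 0 ≤ ℓ ≤ m−1 be integers and set n = jm + ℓ. Then (jm+ℓ)! / ( [(j+1)!]^ℓ · (j!)^{m−ℓ} ) ≤ e^{1/(12m)} · √m · m^{jm+ℓ} / ( (2π)^{(m−1)/2} · j^{(m−1)/2} ). In particular, the inequality (j + ℓ/m)^{jm+ℓ} ≤ (j+1)^{(j+1)ℓ} · j^{j(m−ℓ)} holds for all such j, ℓ, m. -/
open scoped Topology
open Real Filter Nat Stirling Finset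

lemma my_sqrt_pow (x : ℝ) (h : 0 ≤ x) (n : ℕ) :
    Real.sqrt x ^ n = Real.sqrt (x ^ n) := by
  induction n with
  | zero => simp
  | succ k ih => rw [pow_succ, pow_succ, ih, ← Real.sqrt_mul (pow_nonneg h k)]

lemma nat_ineq (j ℓ i : ℕ) (hj : 1 ≤ j) :
    (j * (ℓ + i + 1) + ℓ) * j ^ (ℓ + i) ≤ (ℓ + i + 1) * ((j + 1) ^ ℓ * j ^ (i + 1)) := by
  rcases ℓ with _ | ℓ'
  · have : (j * (0 + i + 1) + 0) * j ^ (0 + i) = (0 + i + 1) * ((j + 1) ^ 0 * j ^ (i + 1)) := by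
      ring
    exact this.le
  · have h1 : j * (ℓ' + 1 + i + 1) + (ℓ' + 1) ≤ (ℓ' + 1 + i + 1) * (j + 1) := by nlinarith
    have h2 : (j + 1) * j ^ (ℓ' + 1) ≤ j * (j + 1) ^ (ℓ' + 1) := by
      have h3 := Nat.pow_le_pow_left (Nat.le_succ j) ℓ'
      calc (j + 1) * j ^ (ℓ' + 1) = (j + 1) * j ^ ℓ' * j := by ring
        _ ≤ (j + 1) * (j + 1) ^ ℓ' * j :=
            Nat.mul_le_mul_right _ (Nat.mul_le_mul_left _ h3)
        _ = j * (j + 1) ^ (ℓ' + 1) := by ring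
    calc (j * (ℓ' + 1 + i + 1) + (ℓ' + 1)) * j ^ (ℓ' + 1 + i)
        ≤ ((ℓ' + 1 + i + 1) * (j + 1)) * j ^ (ℓ' + 1 + i) := Nat.mul_le_mul_right _ h1
      _ = (ℓ' + 1 + i + 1) * ((j + 1) * j ^ (ℓ' + 1)) * j ^ i := by ring
      _ ≤ (ℓ' + 1 + i + 1) * (j * (j + 1) ^ (ℓ' + 1)) * j ^ i :=
            Nat.mul_le_mul_right _ (Nat.mul_le_mul_left _ h2)
      _ = (ℓ' + 1 + i + 1) * ((j + 1) ^ (ℓ' + 1) * j ^ (i + 1)) := by ring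

lemma pow_part2 (m j ℓ : ℕ) (hm : 1 ≤ m) (hj : 1 ≤ j) (hℓm : ℓ ≤ m) :
    ((j : ℝ) + (ℓ : ℝ) / (m : ℝ)) ^ (j * m + ℓ)
      ≤ ((j : ℝ) + 1) ^ ((j + 1) * ℓ) * (j : ℝ) ^ (j * (m - ℓ)) := by
  set n : ℕ := j * m + ℓ with hn
  have hm0 : (0:ℝ) < m := by exact_mod_cast hm
  have hj0 : (0:ℝ) < j := by exact_mod_cast hj
  have hn0 : (0:ℝ) < n := by
    have h1n : 1 ≤ n := by
      calc 1 = 1 * 1 := rfl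
      _ ≤ j * m := Nat.mul_le_mul hj hm
      _ ≤ n := Nat.le_add_right _ _
    exact_mod_cast h1n
  have hcast : ((j * (m - ℓ) : ℕ) : ℝ) = (j:ℝ) * ((m:ℝ) - ℓ) := by
    push_cast [Nat.cast_sub hℓm]; ring
  set w₁ : ℝ := ((j+1) * ℓ : ℕ) / n with hw₁
  set w₂ : ℝ := ((j * (m - ℓ) : ℕ) : ℝ) / n with hw₂
  have hwsum : w₁ + w₂ = 1 := by
    rw [hw₁, hw₂, ← add_div, div_eq_one_iff_eq hn0.ne']
    rw [hcast]; push_cast [hn]; ring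
  have h1 := Real.geom_mean_le_arith_mean2_weighted (w₁ := w₁) (w₂ := w₂)
    (p₁ := ((j:ℝ)+1)⁻¹) (p₂ := (j:ℝ)⁻¹) (by positivity) (by positivity)
    (by positivity) (by positivity) hwsum
  have h2 : w₁ * ((j:ℝ)+1)⁻¹ + w₂ * (j:ℝ)⁻¹ = (m:ℝ)/n := by
    rw [hw₁, hw₂, hcast]
    push_cast
    field_simp
    ring
  rw [h2] at h1
  rw [Real.inv_rpow (by positivity), Real.inv_rpow (by positivity),
    ← mul_inv] at h1
  have ha : (0:ℝ) < ((j:ℝ)+1) ^ w₁ * (j:ℝ) ^ w₂ := by positivity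
  have h3 : (n:ℝ)/m ≤ ((j:ℝ)+1) ^ w₁ * (j:ℝ) ^ w₂ := by
    rw [div_le_iff₀ hm0]
    nlinarith [mul_inv_cancel₀ ha.ne', (le_div_iff₀ hn0).mp h1, ha.le]
  have h4 := pow_le_pow_left₀ (by positivity) h3 n
  have key : (j : ℝ) + (ℓ : ℝ) / (m : ℝ) = (n:ℝ)/m := by
    rw [hn]; push_cast; field_simp
  rw [key]
  refine h4.trans_eq ?_
  rw [mul_pow, ← Real.rpow_natCast (((j:ℝ)+1) ^ w₁) n, ← Real.rpow_natCast ((j:ℝ) ^ w₂) n,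
    ← Real.rpow_mul (by positivity), ← Real.rpow_mul (by positivity),
    hw₁, hw₂, div_mul_cancel₀ _ hn0.ne', div_mul_cancel₀ _ hn0.ne',
    Real.rpow_natCast, Real.rpow_natCast]


lemma aux_frac (x : ℝ) (hx : 0 ≤ x) :
    1/3 * ((1/(2*(x+1)+1))^2 * (1 - (1/(2*(x+1)+1))^2)⁻¹) = 1/(12*(x+1)*(x+2)) := by
  have h2 : (2*(x+1)+1) ≠ 0 := by positivity
  have h3 : (2*(x+1)+1)^2 - 1 ≠ 0 := by nlinarith
  have h4 : (1:ℝ) - (1/(2*(x+1)+1))^2 = ((2*(x+1)+1)^2 - 1)/(2*(x+1)+1)^2 := by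
    field_simp
  rw [h4]
  field_simp
  ring


lemma log_diff_twelve (n : ℕ) :
    Real.log (stirlingSeq (n + 1)) - Real.log (stirlingSeq (n + 2)) ≤
      1 / (12 * (↑(n + 1) : ℝ)) - 1 / (12 * (↑(n + 2) : ℝ)) := by
  set r : ℝ := ((1 : ℝ) / (2 * ↑(n + 1) + 1)) ^ 2 with hr
  have h_nonneg : (0 : ℝ) ≤ r := sq_nonneg _
  have hr_lt : r < 1 := by
    rw [hr, one_div, inv_pow]
    exact inv_lt_one_of_one_lt₀ (one_lt_pow₀ (lt_add_of_pos_left _ <| by positivity) two_ne_zero)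
  have g : HasSum (fun k : ℕ => (1 : ℝ) / 3 * r ^ (k + 1)) (1 / 3 * (r * (1 - r)⁻¹)) := by
    have := ((hasSum_geometric_of_lt_one h_nonneg hr_lt).mul_left r).mul_left ((1:ℝ)/3)
    simp_rw [← _root_.pow_succ'] at this
    exact this
  have hab : ∀ k : ℕ, (1 : ℝ) / (2 * ↑(k + 1) + 1) * r ^ (k + 1) ≤ (1:ℝ)/3 * r ^ (k + 1) := by
    intro k
    apply mul_le_mul_of_nonneg_right _ (pow_nonneg h_nonneg _)
    apply div_le_div_of_nonneg_left one_pos.le (by norm_num)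
    push_cast; linarith [Nat.cast_nonneg (α := ℝ) k]
  have key := hasSum_le hab (log_stirlingSeq_diff_hasSum n) g
  have h1 : (1:ℝ)/3 * (r * (1 - r)⁻¹) = 1 / (12 * ((n:ℝ)+1) * ((n:ℝ)+2)) := by
    rw [hr]; push_cast
    exact aux_frac n (Nat.cast_nonneg n)
  have h3 : 1 / (12 * ((n:ℝ)+1)) - 1 / (12 * ((n:ℝ)+2)) = 1/(12*((n:ℝ)+1)*((n:ℝ)+2)) := by
    field_simp
    ring
  push_cast
  rw [h3]
  exact key.trans_eq h1

lemma stirlingSeq_ge_sqrt_pi (n : ℕ) : Real.sqrt π ≤ stirlingSeq (n + 1) :=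
  stirlingSeq'_antitone.le_of_tendsto
    (tendsto_stirlingSeq_sqrt_pi.comp (tendsto_add_atTop_nat 1)) n

lemma stirlingSeq_le_sqrt_pi_mul (n : ℕ) :
    stirlingSeq (n + 1) ≤ Real.sqrt π * Real.exp (1 / (12 * (↑(n + 1) : ℝ))) := by
  have humono : Monotone (fun k : ℕ =>
      Real.log (stirlingSeq (k + 1)) - 1 / (12 * (↑(k + 1) : ℝ))) := by
    apply monotone_nat_of_le_succ
    intro k
    show Real.log (stirlingSeq (k + 1)) - 1 / (12 * (↑(k + 1) : ℝ)) ≤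
      Real.log (stirlingSeq (k + 2)) - 1 / (12 * (↑(k + 2) : ℝ))
    have := log_diff_twelve k
    push_cast at this ⊢
    linarith
  have h12 : Tendsto (fun k : ℕ => 12 * (↑(k + 1) : ℝ)) atTop atTop := by
    apply Tendsto.const_mul_atTop (by norm_num : (0:ℝ) < 12)
    simpa [Function.comp_def] using
      (tendsto_natCast_atTop_atTop (R := ℝ)).comp (tendsto_add_atTop_nat 1)
  have h2 : Tendsto (fun k : ℕ => 1 / (12 * (↑(k + 1) : ℝ))) atTop (𝓝 0) :=
    h12.inv_tendsto_atTop.congr fun k => (one_div _).symm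
  have h1 : Tendsto (fun k : ℕ => Real.log (stirlingSeq (k + 1))) atTop
      (𝓝 (Real.log (Real.sqrt π))) :=
    ((Real.continuousAt_log (by positivity)).tendsto.comp
      (tendsto_stirlingSeq_sqrt_pi.comp (tendsto_add_atTop_nat 1)))
  have htend : Tendsto (fun k : ℕ =>
      Real.log (stirlingSeq (k + 1)) - 1 / (12 * (↑(k + 1) : ℝ))) atTop
      (𝓝 (Real.log (Real.sqrt π))) := by
    have h3 := h1.sub h2
    rw [sub_zero] at h3
    exact h3
  have hle := humono.ge_of_tendsto htend n
  have hlog : Real.log (stirlingSeq (n + 1)) ≤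
      Real.log (Real.sqrt π) + 1 / (12 * (↑(n + 1) : ℝ)) := by linarith
  calc stirlingSeq (n + 1) = Real.exp (Real.log (stirlingSeq (n + 1))) :=
        (Real.exp_log (stirlingSeq'_pos n)).symm
    _ ≤ Real.exp (Real.log (Real.sqrt π) + 1 / (12 * (↑(n + 1) : ℝ))) :=
        Real.exp_le_exp.mpr hlog
    _ = Real.sqrt π * Real.exp (1 / (12 * (↑(n + 1) : ℝ))) := by
        rw [Real.exp_add, Real.exp_log (by positivity)]

lemma stirling_denom_pos (n : ℕ) (hn : n ≠ 0) :
    0 < Real.sqrt (2 * (n:ℝ)) * ((n / Real.exp 1 : ℝ)) ^ n := by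
  have : (0:ℝ) < n := by exact_mod_cast Nat.pos_of_ne_zero hn
  positivity

lemma factorial_eq_stirling (n : ℕ) (hn : n ≠ 0) :
    (n ! : ℝ) = stirlingSeq n * (Real.sqrt (2 * (n:ℝ)) * ((n / Real.exp 1 : ℝ)) ^ n) := by
  rw [stirlingSeq, div_mul_cancel₀]
  exact (stirling_denom_pos n hn).ne'

lemma sqrt_two_pi_eq : Real.sqrt (2 * π) = Real.sqrt 2 * Real.sqrt π :=
  Real.sqrt_mul (by norm_num) _

lemma sqrt_two_n (n : ℕ) : Real.sqrt (2 * (n:ℝ)) = Real.sqrt 2 * Real.sqrt n :=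
  Real.sqrt_mul (by norm_num) _

lemma factorial_le_stirling (n : ℕ) (hn : n ≠ 0) :
    (n ! : ℝ) ≤ Real.sqrt (2 * π) * Real.sqrt n * ((n / Real.exp 1 : ℝ)) ^ n
      * Real.exp (1 / (12 * (n : ℝ))) := by
  obtain ⟨k, rfl⟩ : ∃ k, n = k + 1 := ⟨n - 1, by omega⟩
  rw [factorial_eq_stirling _ hn]
  calc stirlingSeq (k+1) * (Real.sqrt (2 * (↑(k+1):ℝ)) * ((↑(k+1) / Real.exp 1 : ℝ)) ^ (k+1))
      ≤ (Real.sqrt π * Real.exp (1 / (12 * (↑(k + 1) : ℝ)))) *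
        (Real.sqrt (2 * (↑(k+1):ℝ)) * ((↑(k+1) / Real.exp 1 : ℝ)) ^ (k+1)) := by
        apply mul_le_mul_of_nonneg_right (stirlingSeq_le_sqrt_pi_mul k)
          (stirling_denom_pos (k+1) (Nat.succ_ne_zero k)).le
    _ = _ := by rw [sqrt_two_pi_eq, sqrt_two_n]; push_cast; ring

lemma stirling_le_factorial (n : ℕ) (hn : n ≠ 0) :
    Real.sqrt (2 * π) * Real.sqrt n * ((n / Real.exp 1 : ℝ)) ^ n ≤ (n ! : ℝ) := by
  obtain ⟨k, rfl⟩ : ∃ k, n = k + 1 := ⟨n - 1, by omega⟩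
  rw [factorial_eq_stirling _ hn]
  calc Real.sqrt (2 * π) * Real.sqrt ↑(k+1) * ((↑(k+1) / Real.exp 1 : ℝ)) ^ (k+1)
      = Real.sqrt π * (Real.sqrt (2 * (↑(k+1):ℝ)) * ((↑(k+1) / Real.exp 1 : ℝ)) ^ (k+1)) := by
        rw [sqrt_two_pi_eq, sqrt_two_n]; push_cast; ring
    _ ≤ _ := mul_le_mul_of_nonneg_right (stirlingSeq_ge_sqrt_pi k)
          (stirling_denom_pos (k+1) (Nat.succ_ne_zero k)).le

theorem balanced_multinomial_stirling_bound
    (m j ℓ : ℕ) (hm : 1 ≤ m) (hj : 1 ≤ j) (hℓ : ℓ ≤ m - 1) :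
    ((j * m + ℓ).factorial : ℝ)
        / (((j + 1).factorial : ℝ) ^ ℓ * ((j.factorial : ℝ)) ^ (m - ℓ))
      ≤ Real.exp (1 / (12 * (m : ℝ))) * Real.sqrt m * (m : ℝ) ^ (j * m + ℓ)
        / (Real.sqrt (2 * Real.pi) ^ (m - 1) * Real.sqrt j ^ (m - 1)) ∧
    ((j : ℝ) + (ℓ : ℝ) / (m : ℝ)) ^ (j * m + ℓ)
      ≤ ((j : ℝ) + 1) ^ ((j + 1) * ℓ) * (j : ℝ) ^ (j * (m - ℓ)) := by
  have hpart2 := pow_part2 m j ℓ hm hj (by omega)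
  refine ⟨?_, hpart2⟩
  obtain ⟨i, rfl⟩ : ∃ i, m = ℓ + i + 1 := ⟨m - 1 - ℓ, by omega⟩
  simp only [show ℓ + i + 1 - ℓ = i + 1 from by omega,
    show ℓ + i + 1 - 1 = ℓ + i from by omega] at hpart2 ⊢
  set n : ℕ := j * (ℓ + i + 1) + ℓ with hn
  have hJ0 : (0:ℝ) < j := by exact_mod_cast hj
  have hM0 : (0:ℝ) < ((ℓ + i + 1 : ℕ) : ℝ) := by positivity
  have hn0 : n ≠ 0 := by simp [hn]; omega
  have hN0 : (0:ℝ) < ((n:ℕ) : ℝ) := by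
    have := Nat.pos_of_ne_zero hn0; exact_mod_cast this
  have hE0 : (0:ℝ) < Real.exp 1 := Real.exp_pos 1
  have hS0 : (0:ℝ) < Real.sqrt (2 * π) := Real.sqrt_pos.mpr (by positivity)
  have hDpos : (0:ℝ) < Real.sqrt (2 * π) ^ (ℓ + i) * Real.sqrt j ^ (ℓ + i) := by positivity
  have hBpos : (0:ℝ) < ((j + 1).factorial : ℝ) ^ ℓ * ((j.factorial : ℝ)) ^ (i + 1) := by
    have := j.factorial_pos; have := (j+1).factorial_pos; positivity
  rw [div_le_div_iff₀ hBpos hDpos]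
  have hnum := factorial_le_stirling n hn0
  have hd1 := stirling_le_factorial (j + 1) (by omega)
  have hd2 := stirling_le_factorial j (by omega)
  set E := Real.exp 1 with hEdef
  -- abbreviations (as plain terms)
  have hexp : Real.exp (1 / (12 * ((n:ℕ) : ℝ))) ≤
      Real.exp (1 / (12 * ((ℓ + i + 1 : ℕ) : ℝ))) := by
    apply Real.exp_le_exp.mpr
    apply div_le_div_of_nonneg_left one_pos.le (by positivity)
    have : (ℓ + i + 1 : ℕ) ≤ n := by
      rw [hn]; calc ℓ + i + 1 ≤ j * (ℓ + i + 1) := Nat.le_mul_of_pos_left _ hj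
        _ ≤ n := Nat.le_add_right _ _
    have : ((ℓ + i + 1 : ℕ) : ℝ) ≤ ((n:ℕ) : ℝ) := by exact_mod_cast this
    linarith
  have hsq : Real.sqrt n * Real.sqrt j ^ (ℓ + i) ≤
      Real.sqrt ((ℓ + i + 1 : ℕ) : ℝ) *
        (Real.sqrt ((j:ℝ) + 1) ^ ℓ * Real.sqrt j ^ (i + 1)) := by
    rw [my_sqrt_pow _ hJ0.le, my_sqrt_pow _ (by positivity), my_sqrt_pow _ hJ0.le,
      ← Real.sqrt_mul hN0.le, ← Real.sqrt_mul (by positivity), ← Real.sqrt_mul hM0.le]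
    apply Real.sqrt_le_sqrt
    have := nat_ineq j ℓ i hj
    calc ((n:ℕ):ℝ) * (j:ℝ) ^ (ℓ + i) = (((j * (ℓ + i + 1) + ℓ) * j ^ (ℓ + i) : ℕ) : ℝ) := by
          push_cast [hn]; ring
      _ ≤ (((ℓ + i + 1) * ((j + 1) ^ ℓ * j ^ (i + 1)) : ℕ) : ℝ) := by exact_mod_cast this
      _ = ((ℓ + i + 1 : ℕ) : ℝ) * (((j:ℝ) + 1) ^ ℓ * (j:ℝ) ^ (i + 1)) := by push_cast; ring
  have hb : (((n:ℕ)) : ℝ) ^ n ≤ ((ℓ + i + 1 : ℕ) : ℝ) ^ n *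
      (((j:ℝ) + 1) ^ ((j + 1) * ℓ) * (j:ℝ) ^ (j * (i + 1))) := by
    have key : ((n:ℕ) : ℝ) = ((ℓ + i + 1 : ℕ) : ℝ) * ((j:ℝ) + (ℓ:ℝ) / ((ℓ + i + 1 : ℕ) : ℝ)) := by
      push_cast [hn]; field_simp
      try ring
    calc ((n:ℕ) : ℝ) ^ n = ((ℓ + i + 1 : ℕ) : ℝ) ^ n * ((j:ℝ) + (ℓ:ℝ) / ((ℓ + i + 1 : ℕ) : ℝ)) ^ n := by
          rw [key, mul_pow]
      _ ≤ _ := by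
          exact mul_le_mul_of_nonneg_left hpart2 (by positivity)
  calc ((n.factorial : ℕ) : ℝ) * (Real.sqrt (2 * π) ^ (ℓ + i) * Real.sqrt j ^ (ℓ + i))
      ≤ (Real.sqrt (2 * π) * Real.sqrt n * (((n:ℕ):ℝ) / E) ^ n
          * Real.exp (1 / (12 * ((n:ℕ) : ℝ))))
          * (Real.sqrt (2 * π) ^ (ℓ + i) * Real.sqrt j ^ (ℓ + i)) :=
        mul_le_mul_of_nonneg_right hnum hDpos.le
    _ = (Real.exp (1 / (12 * ((n:ℕ) : ℝ))) * (Real.sqrt n * Real.sqrt j ^ (ℓ + i)))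
          * (((n:ℕ):ℝ) ^ n)
          * (Real.sqrt (2 * π) ^ (ℓ + i + 1) / E ^ n) := by
        rw [div_pow]; field_simp; ring
    _ ≤ (Real.exp (1 / (12 * ((ℓ + i + 1 : ℕ) : ℝ))) *
          (Real.sqrt ((ℓ + i + 1 : ℕ) : ℝ) *
            (Real.sqrt ((j:ℝ) + 1) ^ ℓ * Real.sqrt j ^ (i + 1))))
          * (((ℓ + i + 1 : ℕ) : ℝ) ^ n *
            (((j:ℝ) + 1) ^ ((j + 1) * ℓ) * (j:ℝ) ^ (j * (i + 1))))
          * (Real.sqrt (2 * π) ^ (ℓ + i + 1) / E ^ n) := by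
        apply mul_le_mul_of_nonneg_right _ (by positivity)
        apply mul_le_mul _ hb (by positivity) (by positivity)
        exact mul_le_mul hexp hsq (by positivity) (by positivity)
    _ = (Real.exp (1 / (12 * ((ℓ + i + 1 : ℕ) : ℝ))) * Real.sqrt ((ℓ + i + 1 : ℕ) : ℝ)
          * ((ℓ + i + 1 : ℕ) : ℝ) ^ n)
          * ((Real.sqrt (2 * π) * Real.sqrt ((j:ℝ) + 1) * (((j:ℝ) + 1) / E) ^ (j + 1)) ^ ℓ
            * (Real.sqrt (2 * π) * Real.sqrt j * ((j:ℝ) / E) ^ j) ^ (i + 1)) := by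
        rw [hn]; simp only [div_pow, mul_pow, ← pow_mul]; field_simp; ring
    _ ≤ (Real.exp (1 / (12 * ((ℓ + i + 1 : ℕ) : ℝ))) * Real.sqrt ((ℓ + i + 1 : ℕ) : ℝ)
          * ((ℓ + i + 1 : ℕ) : ℝ) ^ n)
          * ((((j + 1).factorial : ℕ) : ℝ) ^ ℓ * ((j.factorial : ℕ) : ℝ) ^ (i + 1)) := by
        apply mul_le_mul_of_nonneg_left _ (by positivity)
        apply mul_le_mul (pow_le_pow_left₀ (by positivity) _ ℓ)
          (pow_le_pow_left₀ (by positivity) _ (i + 1)) (by positivity) (by positivity)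
        · push_cast at hd1 ⊢; exact hd1
        · push_cast at hd2 ⊢; exact hd2
    _ = _ := by push_cast; ring
end
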